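/- Interval graphs satisfy χ = ω: let G be a finite simple graph and suppose there is an assignment to each vertex x of a set I_x ⊆ ℝ that is either empty or a closed bounded interval, such that distinct vertices x, y are adjacent in G if and only if I_x ∩ I_y ≠ ∅. Then the chromatic number of G equals its clique number. -/

import Mathlib

open Finset

/-- Greedy coloring along a well-founded relation. -/
noncomputable def greedyCol {V : Type*} {r : V → V → Prop} (hwf : WellFounded r)
    (G : SimpleGraph V) : V → ℕ :=
  hwf.fix (fun v ih => sInf {c : ℕ | ∀ w, (h : r w v) → G.Adj w v → ih w h ≠ c})

lemma greedyCol_spec {V : Type*} [Fintype V] {r : V → V → Prop} (hwf : WellFounded r)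
    (G : SimpleGraph V) (v : V) :
    (∀ w, r w v → G.Adj w v → greedyCol hwf G w ≠ greedyCol hwf G v) ∧
      greedyCol hwf G v ≤ ({w | r w v ∧ G.Adj w v} : Set V).ncard := by
  classical
  have hfix : greedyCol hwf G v
      = sInf {c : ℕ | ∀ w, r w v → G.Adj w v → greedyCol hwf G w ≠ c} := by
    unfold greedyCol
    rw [hwf.fix_eq]
  set N : Finset V := ({w | r w v ∧ G.Adj w v} : Set V).toFinset with hN
  set B : Finset ℕ := N.image (greedyCol hwf G) with hB
  -- pigeonhole: some c ≤ B.card avoids B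
  have hsub : ¬ (range (B.card + 1) ⊆ B) := fun h => by
    have := card_le_card h
    simp at this
  obtain ⟨c, hc1, hc2⟩ := not_subset.mp hsub
  have hcle : c ≤ B.card := Nat.lt_succ_iff.mp (mem_range.mp hc1)
  have hcS : c ∈ {c : ℕ | ∀ w, r w v → G.Adj w v → greedyCol hwf G w ≠ c} := by
    intro w hr ha he
    exact hc2 (mem_image.mpr ⟨w, by simp [hN, hr, ha], he⟩)
  constructor
  · intro w hr ha
    rw [hfix]
    exact (Nat.sInf_mem ⟨c, hcS⟩) w hr ha
  · rw [hfix]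
    calc sInf _ ≤ c := Nat.sInf_le hcS
      _ ≤ B.card := hcle
      _ ≤ N.card := card_image_le
      _ = ({w | r w v ∧ G.Adj w v} : Set V).ncard := (Set.ncard_eq_toFinset_card' _).symm

theorem interval_graph_chromatic_eq_clique
    {V : Type*} [Fintype V] (G : SimpleGraph V)
    (I : V → Set ℝ)
    (hI : ∀ x, I x = ∅ ∨ ∃ a b : ℝ, a ≤ b ∧ I x = Set.Icc a b)
    (hadj : ∀ x y, x ≠ y → (G.Adj x y ↔ (I x ∩ I y).Nonempty)) :
    G.chromaticNumber = (G.cliqueNum : ℕ∞) := by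
  classical
  set l : V → ℝ := fun v => sInf (I v) with hl
  set e : V → Fin (Fintype.card V) := fun v => Fintype.equivFin V v with he
  set r : V → V → Prop := fun v w => l v < l w ∨ (l v = l w ∧ e v < e w) with hr
  haveI : IsTrans V r := by
    constructor
    rintro a b c (h1 | ⟨h1, h1'⟩) (h2 | ⟨h2, h2'⟩)
    · exact Or.inl (h1.trans h2)
    · exact Or.inl (h2 ▸ h1)
    · exact Or.inl (h1 ▸ h2)
    · exact Or.inr ⟨h1.trans h2, h1'.trans h2'⟩
  haveI : IsIrrefl V r := by
    constructor
    rintro a (h | ⟨h, h'⟩)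
    · exact lt_irrefl _ h
    · exact lt_irrefl _ h'
  have hwf : WellFounded r := Finite.wellFounded_of_trans_of_irrefl r
  have htot : ∀ v w : V, v ≠ w → r v w ∨ r w v := by
    intro v w hvw
    rcases lt_trichotomy (l v) (l w) with h | h | h
    · exact Or.inl (Or.inl h)
    · rcases lt_or_gt_of_ne (fun hee : e v = e w =>
        hvw ((Fintype.equivFin V).injective hee)) with h' | h'
      · exact Or.inl (Or.inr ⟨h, h'⟩)
      · exact Or.inr (Or.inr ⟨h.symm, h'⟩)
    · exact Or.inr (Or.inl h)
  have hrle : ∀ v w : V, r v w → l v ≤ l w := by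
    rintro v w (h | ⟨h, _⟩)
    · exact h.le
    · exact h.le
  -- left endpoint lies in every earlier neighbor's interval
  have hmem : ∀ v w : V, r w v → G.Adj w v → l v ∈ I w ∧ l v ∈ I v := by
    intro v w hrwv hA
    have hne := hA.ne
    have hint : (I w ∩ I v).Nonempty := (hadj w v hne).mp hA
    obtain ⟨p, hpw, hpv⟩ := hint
    rcases hI v with hv | ⟨a, b, hab, hv⟩
    · rw [hv] at hpv; exact absurd hpv (Set.notMem_empty p)
    rcases hI w with hw | ⟨c, d, hcd, hw⟩
    · rw [hw] at hpw; exact absurd hpw (Set.notMem_empty p)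
    have hlv : l v = a := by rw [hl]; simp only [hv]; exact csInf_Icc hab
    have hlw : l w = c := by rw [hl]; simp only [hw]; exact csInf_Icc hcd
    rw [hv] at hpv; rw [hw] at hpw
    have h1 : c ≤ a := by
      have := hrle w v hrwv; rw [hlv, hlw] at this; exact this
    have h2 : a ≤ d := le_trans hpv.1 hpw.2
    refine ⟨?_, ?_⟩
    · rw [hlv, hw]; exact ⟨h1, h2⟩
    · rw [hlv, hv]; exact ⟨le_refl a, hab⟩
  -- earlier neighbors plus v form a clique
  have hclique : ∀ v : V, G.IsClique (insert v (({w | r w v ∧ G.Adj w v} : Set V))) := by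
    intro v x hx y hy hxy
    simp only [Set.mem_insert_iff, Set.mem_setOf_eq] at hx hy
    rcases hx with rfl | ⟨hx1, hx2⟩
    · rcases hy with rfl | ⟨hy1, hy2⟩
      · exact absurd rfl hxy
      · exact hy2.symm
    · rcases hy with rfl | ⟨hy1, hy2⟩
      · exact hx2
      · -- both earlier neighbors: l y contains... both contain l v
        have h1 := (hmem _ _ hx1 hx2).1
        have h2 := (hmem _ _ hy1 hy2).1
        exact (hadj x y hxy).mpr ⟨l v, h1, h2⟩
  -- the greedy coloring uses < cliqueNum colors
  have hbound : ∀ v : V, greedyCol hwf G v < G.cliqueNum := by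
    intro v
    have hspec := (greedyCol_spec hwf G v).2
    set N : Set V := {w | r w v ∧ G.Adj w v} with hNdef
    have hvN : v ∉ N := fun h => G.loopless.irrefl v h.2
    have hcard : (insert v N).ncard = N.ncard + 1 :=
      Set.ncard_insert_of_notMem hvN (Set.toFinite N)
    have hcl : (insert v N).ncard ≤ G.cliqueNum := by
      have hfin : insert v N = ((insert v N).toFinset : Set V) := by simp
      have hc : G.IsClique ((insert v N).toFinset : Set V) := by
        rw [← hfin]; exact hclique v
      have := hc.card_le_cliqueNum
      rwa [← Set.ncard_eq_toFinset_card'] at this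
    omega
  have hcolorable : G.Colorable G.cliqueNum := by
    refine ⟨SimpleGraph.Coloring.mk (fun v => ⟨greedyCol hwf G v, hbound v⟩) ?_⟩
    intro a b hab h
    have hne : a ≠ b := hab.ne
    have hval : greedyCol hwf G a = greedyCol hwf G b := congrArg Fin.val h
    rcases htot a b hne with h' | h'
    · exact (greedyCol_spec hwf G b).1 a h' hab hval
    · exact (greedyCol_spec hwf G a).1 b h' hab.symm hval.symm
  refine le_antisymm hcolorable.chromaticNumber_le ?_
  obtain ⟨s, hs⟩ := G.exists_isNClique_cliqueNum
  have := hs.isClique.card_le_chromaticNumber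
  rwa [hs.card_eq] at this
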